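/- For every q < 1 and every r > 0 there exist a sequence of pairs of positive real numbers (r_i, d_i), i ≥ 1, and positive constants M, M′ such that: (1) r₁ = r; (2) r_{i+1} = r_i + d_i for all i; (3) r_i / d_i is a positive integer for all i; (4) M r_i^q ≤ d_i ≤ M′ r_i^q for all i; (5) r_i → ∞ as i → ∞. -/

import Mathlib

/-- Construction of annuli radii: for any `q < 1` and `r > 0` there are sequences
`(rᵢ, dᵢ)` of positive reals with `r₁ = r`, `rᵢ₊₁ = rᵢ + dᵢ`, `rᵢ/dᵢ ∈ ℕ`,
`M rᵢ^q ≤ dᵢ ≤ M' rᵢ^q` for positive constants `M, M'`, and `rᵢ → ∞`. -/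
theorem stmt_12 (q r : ℝ) (hq : q < 1) (hr : 0 < r) :
    ∃ (rr dd : ℕ → ℝ) (M M' : ℝ), 0 < M ∧ 0 < M' ∧
      (∀ i, 0 < rr i ∧ 0 < dd i) ∧
      rr 0 = r ∧
      (∀ i, rr (i + 1) = rr i + dd i) ∧
      (∀ i, ∃ n : ℕ, 0 < n ∧ rr i = (n : ℝ) * dd i) ∧
      (∀ i, M * rr i ^ q ≤ dd i ∧ dd i ≤ M' * rr i ^ q) ∧
      Filter.Tendsto rr Filter.atTop Filter.atTop := by
  have hq' : 0 < 1 - q := by linarith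
  set F : ℝ → ℝ := fun x => x + x / (⌈x ^ (1 - q)⌉₊ : ℝ) with hF
  set rr : ℕ → ℝ := fun i => F^[i] r with hrr
  set dd : ℕ → ℝ := fun i => rr i / (⌈(rr i) ^ (1 - q)⌉₊ : ℝ) with hdd
  have hceil : ∀ x : ℝ, 0 < x → (1 : ℝ) ≤ (⌈x ^ (1 - q)⌉₊ : ℝ) := by
    intro x hx
    exact_mod_cast Nat.one_le_ceil_iff.2 (Real.rpow_pos_of_pos hx _)
  have hrec : ∀ i, rr (i + 1) = rr i + dd i := by
    intro i
    simp only [hrr, hdd, Function.iterate_succ_apply', hF]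
  have hpos : ∀ i, 0 < rr i := by
    intro i
    induction i with
    | zero => simpa [hrr] using hr
    | succ n ih =>
      have h1 := hceil _ ih
      rw [hrec n]
      have h0 : (0 : ℝ) < (⌈(rr n) ^ (1 - q)⌉₊ : ℝ) := lt_of_lt_of_le one_pos h1
      exact add_pos ih (div_pos ih h0)
  have hcpos : ∀ i, (0 : ℝ) < (⌈(rr i) ^ (1 - q)⌉₊ : ℝ) := fun i =>
    lt_of_lt_of_le one_pos (hceil _ (hpos i))
  have hdpos : ∀ i, 0 < dd i := fun i => div_pos (hpos i) (hcpos i)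
  have hmono : Monotone rr :=
    monotone_nat_of_le_succ (fun i => by rw [hrec i]; linarith [hdpos i])
  have hge : ∀ i, r ≤ rr i := by
    intro i
    have : rr 0 = r := rfl
    calc r = rr 0 := this.symm
    _ ≤ rr i := hmono (Nat.zero_le i)
  -- the key identity: rr i = rr i ^ q * rr i ^ (1 - q)
  have hid : ∀ i, rr i = rr i ^ q * rr i ^ (1 - q) := by
    intro i
    rw [← Real.rpow_add (hpos i)]
    norm_num
  have hqpow : ∀ i, 0 < rr i ^ q := fun i => Real.rpow_pos_of_pos (hpos i) q
  set x0 : ℝ := r ^ (1 - q) with hx0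
  have hx0pos : 0 < x0 := Real.rpow_pos_of_pos hr _
  have hddi : ∀ i, dd i = rr i / (⌈(rr i) ^ (1 - q)⌉₊ : ℝ) := fun i => rfl
  have hbounds : ∀ i, x0 / (x0 + 1) * rr i ^ q ≤ dd i ∧ dd i ≤ 1 * rr i ^ q := by
    intro i
    set x : ℝ := rr i ^ (1 - q) with hx
    have hxpos : 0 < x := Real.rpow_pos_of_pos (hpos i) _
    have hx0x : x0 ≤ x := Real.rpow_le_rpow hr.le (hge i) hq'.le
    have hcx : x ≤ (⌈x⌉₊ : ℝ) := Nat.le_ceil x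
    have hcx' : (⌈x⌉₊ : ℝ) ≤ x + 1 := (Nat.ceil_lt_add_one hxpos.le).le
    have hcpos' : (0 : ℝ) < (⌈x⌉₊ : ℝ) := lt_of_lt_of_le hxpos hcx
    constructor
    · -- lower bound
      have h1 : rr i / (x + 1) ≤ dd i := by
        rw [hddi i, ← hx]
        exact div_le_div_of_nonneg_left (hpos i).le hcpos' hcx'
      refine le_trans ?_ h1
      have key : rr i / (x + 1) = rr i ^ q * (x / (x + 1)) := by
        rw [mul_div_assoc']
        congr 1
        rw [hx]; exact hid i
      rw [key]
      have h2 : x0 / (x0 + 1) ≤ x / (x + 1) := by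
        rw [div_le_div_iff₀ (by linarith) (by linarith)]
        nlinarith
      calc x0 / (x0 + 1) * rr i ^ q = rr i ^ q * (x0 / (x0 + 1)) := by ring
        _ ≤ rr i ^ q * (x / (x + 1)) := mul_le_mul_of_nonneg_left h2 (hqpow i).le
    · -- upper bound
      have h1 : dd i ≤ rr i / x := by
        rw [hddi i, ← hx]
        exact div_le_div_of_nonneg_left (hpos i).le hxpos hcx
      refine h1.trans ?_
      rw [one_mul]
      have key : rr i / x = rr i ^ q := by
        conv_lhs => rw [hid i, ← hx]
        rw [mul_div_assoc, div_self hxpos.ne', mul_one]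
      exact key.le
  refine ⟨rr, dd, x0 / (x0 + 1), 1, div_pos hx0pos (by linarith), one_pos,
    fun i => ⟨hpos i, hdpos i⟩, rfl, hrec, ?_, hbounds, ?_⟩
  · -- divisibility
    intro i
    refine ⟨⌈(rr i) ^ (1 - q)⌉₊, ?_, ?_⟩
    · exact_mod_cast hcpos i
    · rw [hddi i, mul_div_assoc', mul_comm, mul_div_assoc, div_self (hcpos i).ne', mul_one]
  · -- tendsto
    rcases tendsto_of_monotone hmono with h | ⟨L, hL⟩
    · exact h
    exfalso
    have hrL : r ≤ L := by
      have := hmono.ge_of_tendsto hL 0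
      exact this
    have hLpos : 0 < L := lt_of_lt_of_le hr hrL
    have hdd0 : Filter.Tendsto dd Filter.atTop (nhds 0) := by
      have h1 : Filter.Tendsto (fun i => rr (i + 1)) Filter.atTop (nhds L) :=
        hL.comp (Filter.tendsto_add_atTop_nat 1)
      have h2 : Filter.Tendsto (fun i => rr (i + 1) - rr i) Filter.atTop (nhds (L - L)) :=
        h1.sub hL
      rw [sub_self] at h2
      refine h2.congr (fun i => ?_)
      rw [hrec i]; ring
    have hpq : Filter.Tendsto (fun i => x0 / (x0 + 1) * rr i ^ q) Filter.atTop
        (nhds (x0 / (x0 + 1) * L ^ q)) := by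
      have hcont : ContinuousAt (fun y : ℝ => y ^ q) L :=
        Real.continuousAt_rpow_const L q (Or.inl hLpos.ne')
      exact (hcont.tendsto.comp hL).const_mul _
    have hle : x0 / (x0 + 1) * L ^ q ≤ 0 := by
      exact le_of_tendsto_of_tendsto' hpq hdd0 (fun i => (hbounds i).1)
    have : 0 < x0 / (x0 + 1) * L ^ q :=
      mul_pos (div_pos hx0pos (by linarith)) (Real.rpow_pos_of_pos hLpos q)
    linarith
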